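/- Let A = [A_{i,j}]_{i,j=1}^m ∈ M_m(M_n) be positive semidefinite. Then I_m ⊗ tr_1(A^τ) ≥ −A^τ + 2D_A, where D_A = A_{1,1} ⊕ A_{2,2} ⊕ ⋯ ⊕ A_{m,m}. -/

import Mathlib

open Matrix Kronecker BigOperators
open scoped ComplexOrder

noncomputable section

/-- The partial transpose of a block matrix `A ∈ M_m(M_n)`. -/
def ptrans {m n : ℕ} (A : Matrix (Fin m × Fin n) (Fin m × Fin n) ℂ) :
    Matrix (Fin m × Fin n) (Fin m × Fin n) ℂ :=
  fun p q => A (q.1, p.2) (p.1, q.2)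

/-- The first partial trace `tr₁ A = ∑ i, A_{i,i} ∈ M_n`. -/
def tr1 {m n : ℕ} (A : Matrix (Fin m × Fin n) (Fin m × Fin n) ℂ) :
    Matrix (Fin n) (Fin n) ℂ :=
  fun r s => ∑ i, A (i, r) (i, s)

/-- `D_A = A₁₁ ⊕ A₂₂ ⊕ ⋯ ⊕ A_mm`, the block diagonal part of `A`. -/
def blockDiagPart {m n : ℕ} (A : Matrix (Fin m × Fin n) (Fin m × Fin n) ℂ) :
    Matrix (Fin m × Fin n) (Fin m × Fin n) ℂ :=
  fun p q => if p.1 = q.1 then A p q else 0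

/-- The matrix `(E_ij + E_ji) ⊗ I_n`, used to conjugate `A`. -/
def Pm {m : ℕ} (n : ℕ) (i j : Fin m) : Matrix (Fin m × Fin n) (Fin m × Fin n) ℂ :=
  fun u p => ((if u.1 = i ∧ p.1 = j then 1 else 0) + (if u.1 = j ∧ p.1 = i then 1 else 0))
    * (if u.2 = p.2 then 1 else 0)

lemma Pm_entry {m n : ℕ} (A : Matrix (Fin m × Fin n) (Fin m × Fin n) ℂ) (i j : Fin m)
    (p q : Fin m × Fin n) :
    ((Pm n i j)ᴴ * A * (Pm n i j)) p q =
      (if p.1 = j ∧ q.1 = j then A (i, p.2) (i, q.2) else 0)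
      + (if p.1 = j ∧ q.1 = i then A (i, p.2) (j, q.2) else 0)
      + (if p.1 = i ∧ q.1 = j then A (j, p.2) (i, q.2) else 0)
      + (if p.1 = i ∧ q.1 = i then A (j, p.2) (j, q.2) else 0) := by
  simp [Matrix.mul_apply, Pm, conjTranspose_apply, Fintype.sum_prod_type, ite_and,
    add_mul, mul_add, Finset.sum_add_distrib, Finset.mul_sum, Finset.sum_ite_eq,
    Finset.sum_ite_eq', mul_comm, mul_assoc, apply_ite (starRingEnd ℂ), _root_.map_one,
    _root_.map_zero, mul_ite, ite_mul, mul_zero, zero_mul, mul_one, one_mul]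
  split_ifs <;> ring

lemma sumAll {m n : ℕ} (A : Matrix (Fin m × Fin n) (Fin m × Fin n) ℂ) :
    (∑ i, ∑ j, (Pm n i j)ᴴ * A * (Pm n i j)) =
      (2:ℂ) • ((1 : Matrix (Fin m) (Fin m) ℂ) ⊗ₖ tr1 A) + (2:ℂ) • ptrans A := by
  ext p q
  simp only [Matrix.sum_apply, Pm_entry, Matrix.add_apply, Matrix.smul_apply,
    kroneckerMap_apply, Matrix.one_apply, smul_eq_mul, ite_and, ite_mul, one_mul, zero_mul,
    Finset.sum_add_distrib, tr1, ptrans]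
  simp [Finset.sum_ite_eq, Finset.sum_ite_eq', apply_ite, Finset.sum_const_zero, eq_comm]
  split_ifs <;> ring

lemma sumDiagAux {m n : ℕ} (A : Matrix (Fin m × Fin n) (Fin m × Fin n) ℂ)
    (p q : Fin m × Fin n) :
    (∑ i : Fin m, (if p.1 = i ∧ q.1 = i then A (i, p.2) (i, q.2) else (0:ℂ))) =
    blockDiagPart A p q := by
  obtain ⟨a, r⟩ := p; obtain ⟨b, s⟩ := q
  simp only [ite_and, blockDiagPart]
  rw [Finset.sum_ite_eq]
  simp only [Finset.mem_univ, if_true]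
  split_ifs with h1 h2 <;> simp_all

lemma sumDiag {m n : ℕ} (A : Matrix (Fin m × Fin n) (Fin m × Fin n) ℂ) :
    (∑ i, (Pm n i i)ᴴ * A * (Pm n i i)) = (4:ℂ) • blockDiagPart A := by
  ext p q
  have h1 : ∀ i : Fin m, ((Pm n i i)ᴴ * A * (Pm n i i)) p q
      = (4:ℂ) * (if p.1 = i ∧ q.1 = i then A (i, p.2) (i, q.2) else 0) := by
    intro i; rw [Pm_entry]; split_ifs <;> ring
  rw [Matrix.sum_apply]
  simp only [h1, ← Finset.mul_sum, sumDiagAux]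
  simp

/-- If `A ∈ M_m(M_n)` is positive semidefinite, then
`I_m ⊗ tr₁(Aᵗ) ≥ -Aᵗ + 2 D_A` in the Loewner order. -/
theorem stmt1 {m n : ℕ} (A : Matrix (Fin m × Fin n) (Fin m × Fin n) ℂ)
    (hA : A.PosSemidef) :
    ((1 : Matrix (Fin m) (Fin m) ℂ) ⊗ₖ tr1 (ptrans A)
      - (-(ptrans A) + 2 • blockDiagPart A)).PosSemidef := by
  set M := (1 : Matrix (Fin m) (Fin m) ℂ) ⊗ₖ tr1 (ptrans A)
      - (-(ptrans A) + 2 • blockDiagPart A) with hM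
  have htr : tr1 (ptrans A) = tr1 A := rfl
  have key : (2:ℂ) • M = ∑ i, ∑ j ∈ Finset.univ.erase i, (Pm n i j)ᴴ * A * (Pm n i j) := by
    have h2 : ∀ i : Fin m,
        (∑ j ∈ Finset.univ.erase i, (Pm n i j)ᴴ * A * (Pm n i j))
          = (∑ j, (Pm n i j)ᴴ * A * (Pm n i j)) - (Pm n i i)ᴴ * A * (Pm n i i) := by
      intro i
      rw [← Finset.sum_erase_add Finset.univ _ (Finset.mem_univ i)]
      rw [add_sub_cancel_right]
    rw [Finset.sum_congr rfl fun i _ => h2 i, Finset.sum_sub_distrib, sumAll, sumDiag,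
      hM, htr]
    module
  have hsum : ((2:ℂ) • M).PosSemidef := by
    rw [key]
    refine Finset.sum_induction _ _ (fun a b ha hb => ha.add hb) .zero fun i _ => ?_
    exact Finset.sum_induction _ _ (fun a b ha hb => ha.add hb) .zero
      fun j _ => hA.conjTranspose_mul_mul_same _
  constructor
  · have h2 := hsum.1
    rw [Matrix.IsHermitian, Matrix.conjTranspose_smul] at h2
    simp only [star_ofNat] at h2
    exact smul_right_injective _ (two_ne_zero) h2
  · intro x
    have h3 := hsum.2 x
    have e : (x.sum fun i xi => x.sum fun j xj => star xi * ((2:ℂ) • M) i j * xj)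
        = 2 * (x.sum fun i xi => x.sum fun j xj => star xi * M i j * xj) := by
      simp only [Finsupp.sum, Finset.mul_sum, Matrix.smul_apply, smul_eq_mul]
      exact Finset.sum_congr rfl fun i _ => Finset.sum_congr rfl fun j _ => by ring
    rw [e] at h3
    have h4 : (0:ℂ) ≤ 2⁻¹ := by rw [Complex.le_def]; norm_num
    have h5 : (x.sum fun i xi => x.sum fun j xj => star xi * M i j * xj)
        = 2⁻¹ * (2 * (x.sum fun i xi => x.sum fun j xj => star xi * M i j * xj)) := by ring
    rw [h5]
    exact mul_nonneg h4 h3
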